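/- Let f : ℝ^σ → ℝ ∪ {-∞} have convex effective domain, be strictly concave on the relative interior of dom f, and be continuous on dom f. Then f has a strictly supporting hyperplane at every u ∈ dom f except possibly relative boundary points: for each u in the relative interior of dom f there exists β ∈ ℝ^σ such that f(v) < f(u) + ⟨β, v-u⟩ for all v ≠ u. -/

import Mathlib

open Set Filter Topology

open scoped RealInnerProductSpace

lemma mem_intrinsicInterior_iff_ball {E : Type*} [NormedAddCommGroup E] [NormedSpace ℝ E]
    {s : Set E} {u : E} :
    u ∈ intrinsicInterior ℝ s ↔
      u ∈ s ∧ ∃ ε > (0:ℝ), ∀ w, w ∈ affineSpan ℝ s → dist w u < ε → w ∈ s := by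
  constructor
  · rintro ⟨y, hy, rfl⟩
    obtain ⟨ε, hε, hball⟩ := Metric.mem_nhds_iff.1 (mem_interior_iff_mem_nhds.1 hy)
    refine ⟨interior_subset (s := ((↑) ⁻¹' s : Set (affineSpan ℝ s))) hy, ε, hε, fun w hw hdist => ?_⟩
    exact hball (show (⟨w, hw⟩ : affineSpan ℝ s) ∈ Metric.ball y ε by
      simpa [Metric.mem_ball, Subtype.dist_eq] using hdist)
  · rintro ⟨hus, ε, hε, h⟩
    refine ⟨⟨u, subset_affineSpan ℝ s hus⟩, ?_, rfl⟩
    rw [mem_interior_iff_mem_nhds, Metric.mem_nhds_iff]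
    exact ⟨ε, hε, fun y hy => h y y.2 (by simpa [Metric.mem_ball, Subtype.dist_eq] using hy)⟩


lemma relint_of_ball {E : Type*} [NormedAddCommGroup E] [NormedSpace ℝ E]
    {s : Set E} {u : E} {ε : ℝ}
    (h : ∀ w, w ∈ affineSpan ℝ s → dist w u < ε → w ∈ s) :
    ∀ w, w ∈ affineSpan ℝ s → dist w u < ε → w ∈ intrinsicInterior ℝ s := by
  intro w hw hd
  rw [mem_intrinsicInterior_iff_ball]
  refine ⟨h w hw hd, ε - dist w u, by simpa using hd, fun z hz hdz => h z hz ?_⟩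
  calc dist z u ≤ dist z w + dist w u := dist_triangle _ _ _
  _ < ε := by linarith


lemma segment_relint {E : Type*} [NormedAddCommGroup E] [NormedSpace ℝ E] {s : Set E}
    (hs : Convex ℝ s) {u v : E} (hu : u ∈ intrinsicInterior ℝ s) (hv : v ∈ s)
    {t : ℝ} (h0 : 0 ≤ t) (h1 : t < 1) : u + t • (v - u) ∈ intrinsicInterior ℝ s := by
  obtain ⟨hus, ε, hε, hball⟩ := mem_intrinsicInterior_iff_ball.1 hu
  have h1t : (1:ℝ) - t ≠ 0 := by linarith
  have hcomb : ∀ z : E, (1 - t) • z + t • v ∈ s → z ∈ s → True := fun _ _ _ => trivial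
  have hxs : u + t • (v - u) ∈ s := by
    have := hs hus hv (by linarith : (0:ℝ) ≤ 1 - t) h0 (by ring)
    convert this using 1
    module
  rw [mem_intrinsicInterior_iff_ball]
  set x := u + t • (v - u) with hxdef
  have hxspan : x ∈ affineSpan ℝ s := subset_affineSpan ℝ s hxs
  refine ⟨hxs, (1 - t) * ε, mul_pos (by linarith) hε, fun w hw hd => ?_⟩
  have hdmem : w - x ∈ (affineSpan ℝ s).direction := by
    simpa using AffineSubspace.vsub_mem_direction hw hxspan
  set w' := u + (1 - t)⁻¹ • (w - x) with hw'def
  have hw'span : w' ∈ affineSpan ℝ s := by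
    have := AffineSubspace.vadd_mem_of_mem_direction
      (Submodule.smul_mem _ ((1-t)⁻¹) hdmem) (subset_affineSpan ℝ s hus)
    simpa [vadd_eq_add, add_comm] using this
  have hw's : w' ∈ s := by
    apply hball w' hw'span
    have hdist : dist w' u = (1 - t)⁻¹ * dist w x := by
      rw [dist_eq_norm, dist_eq_norm, hw'def, add_sub_cancel_left, norm_smul,
        Real.norm_eq_abs, abs_of_pos (inv_pos.2 (by linarith : (0:ℝ) < 1 - t))]
    rw [hdist]
    rw [show ε = (1-t)⁻¹ * ((1-t) * ε) by field_simp]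
    exact mul_lt_mul_of_pos_left hd (inv_pos.2 (by linarith))
  have hc : (1 - t) * (1 - t)⁻¹ = 1 := mul_inv_cancel₀ h1t
  have hw_eq : w = (1 - t) • w' + t • v := by
    simp only [hw'def, smul_add, smul_smul, hc, one_smul, hxdef]
    module
  rw [hw_eq]
  exact hs hw's hv (by linarith) (by linarith) (by ring)


/-- Real-valued core lemma: a strict supergradient at a relative interior point. -/
lemma exists_strict_supergradient
    {E : Type*} [NormedAddCommGroup E] [InnerProductSpace ℝ E] [FiniteDimensional ℝ E]
    {D : Set E} {g : E → ℝ} (hconv : Convex ℝ D)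
    (hstrict : ∀ w₁ ∈ intrinsicInterior ℝ D, ∀ w₂ ∈ intrinsicInterior ℝ D, w₁ ≠ w₂ →
      ∀ l : ℝ, 0 < l → l < 1 → l * g w₁ + (1 - l) * g w₂ < g (l • w₁ + (1 - l) • w₂))
    (hgcont : ContinuousOn g D)
    {u : E} (hu : u ∈ intrinsicInterior ℝ D) :
    ∃ β : E, ∀ v ∈ D, v ≠ u → g v < g u + ⟪β, v - u⟫ := by
  have huD : u ∈ D := intrinsicInterior_subset hu
  have huA : u ∈ affineSpan ℝ D := subset_affineSpan ℝ D huD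
  have hseg : ∀ v ∈ D, ∀ t : ℝ, 0 ≤ t → t < 1 → u + t • (v - u) ∈ intrinsicInterior ℝ D :=
    fun v hv t h0 h1 => segment_relint hconv hu hv h0 h1
  have hcombo : ∀ w₁ ∈ intrinsicInterior ℝ D, ∀ w₂ ∈ intrinsicInterior ℝ D, ∀ l : ℝ,
      0 ≤ l → l ≤ 1 → l • w₁ + (1 - l) • w₂ ∈ intrinsicInterior ℝ D := by
    intro w₁ h1 w₂ h2 l hl0 hl1
    rcases eq_or_lt_of_le hl1 with rfl | hlt
    · simpa using h1
    · have := segment_relint hconv h2 (intrinsicInterior_subset h1) hl0 hlt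
      convert this using 1
      module
  have hconc : ∀ w₁ ∈ intrinsicInterior ℝ D, ∀ w₂ ∈ intrinsicInterior ℝ D, ∀ l : ℝ,
      0 ≤ l → l ≤ 1 → l * g w₁ + (1 - l) * g w₂ ≤ g (l • w₁ + (1 - l) • w₂) := by
    intro w₁ h1 w₂ h2 l hl0 hl1
    rcases eq_or_lt_of_le hl0 with rfl | hl0'
    · simp
    rcases eq_or_lt_of_le hl1 with rfl | hl1'
    · simp
    rcases eq_or_ne w₁ w₂ with rfl | hne
    · have hw : l • w₁ + (1 - l) • w₁ = w₁ := by module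
      rw [hw]; nlinarith [le_refl (g w₁)]
    · exact le_of_lt (hstrict w₁ h1 w₂ h2 hne l hl0' hl1')
  -- the orthogonal projection onto the direction of the affine span, based at u
  set V : Submodule ℝ E := (affineSpan ℝ D).direction with hV
  set p : E → E := fun x => u + (Submodule.orthogonalProjectionOnto V (x - u) : E) with hp
  have hpdef : ∀ x, p x = u + (Submodule.orthogonalProjectionOnto V (x - u) : E) := fun _ => rfl
  have hpA : ∀ x, p x ∈ affineSpan ℝ D := by
    intro x
    have := AffineSubspace.vadd_mem_of_mem_direction
      (SetLike.coe_mem (Submodule.orthogonalProjectionOnto V (x - u))) huA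
    simpa [hp, vadd_eq_add, add_comm] using this
  have hpfix : ∀ w, w ∈ affineSpan ℝ D → p w = w := by
    intro w hw
    have hmem : w - u ∈ V := by
      simpa using AffineSubspace.vsub_mem_direction hw huA
    rw [hpdef, show V.orthogonalProjectionOnto (w - u) = ⟨w - u, hmem⟩ from
      V.orthogonalProjectionOnto_mem_subspace_eq_self ⟨w - u, hmem⟩]
    module
  have hplip : ∀ x y, dist (p x) (p y) ≤ dist x y := by
    intro x y
    rw [dist_eq_norm, dist_eq_norm]
    have harg : x - u - (y - u) = x - y := by abel
    have hsub : p x - p y = (Submodule.orthogonalProjectionOnto V (x - y) : E) := by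
      calc p x - p y
          = (Submodule.orthogonalProjectionOnto V (x - u) : E) - (Submodule.orthogonalProjectionOnto V (y - u) : E) := by
            rw [hpdef, hpdef]; abel
        _ = ((Submodule.orthogonalProjectionOnto V (x - u) - Submodule.orthogonalProjectionOnto V (y - u) : V) : E) := by
            rw [AddSubgroupClass.coe_sub]
        _ = ((Submodule.orthogonalProjectionOnto V (x - u - (y - u)) : V) : E) :=
            congrArg _ (map_sub (Submodule.orthogonalProjectionOnto V) (x - u) (y - u)).symm
        _ = (Submodule.orthogonalProjectionOnto V (x - y) : E) := by rw [harg]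
    rw [hsub]
    calc ‖(Submodule.orthogonalProjectionOnto V (x - y) : E)‖
        ≤ ‖Submodule.orthogonalProjectionOnto V‖ * ‖x - y‖ := (Submodule.orthogonalProjectionOnto V).le_opNorm _
      _ ≤ 1 * ‖x - y‖ := by
          gcongr; exact Submodule.orthogonalProjectionOnto_norm_le V
      _ = ‖x - y‖ := one_mul _
  have hpcont : Continuous p := by
    rw [hp]
    exact continuous_const.add
      (continuous_subtype_val.comp ((Submodule.orthogonalProjectionOnto V).continuous.comp
        (continuous_id.sub continuous_const)))
  have hpaffine : ∀ (x y : E) (a : ℝ),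
      p (a • x + (1 - a) • y) = a • p x + (1 - a) • p y := by
    intro x y a
    rw [hpdef, hpdef, hpdef,
      show a • x + (1 - a) • y - u = a • (x - u) + (1 - a) • (y - u) by module,
      map_add, map_smul, map_smul, Submodule.coe_add, SetLike.val_smul, SetLike.val_smul]
    module
  -- the convex open set for separation
  set S : Set (E × ℝ) := {q | p q.1 ∈ intrinsicInterior ℝ D ∧ q.2 < g (p q.1)} with hS
  have hSopen : IsOpen S := by
    rw [isOpen_iff_mem_nhds]
    rintro ⟨x₀, t₀⟩ ⟨hx₀, ht₀⟩
    obtain ⟨hx₀D, ε, hε, hball⟩ := mem_intrinsicInterior_iff_ball.1 hx₀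
    have hnear : ∀ x : E, dist x x₀ < ε → p x ∈ intrinsicInterior ℝ D := by
      intro x hx
      refine relint_of_ball hball (p x) (hpA x) ?_
      calc dist (p x) (p x₀) ≤ dist x x₀ := hplip x x₀
        _ < ε := hx
    have hfst : Tendsto (fun q : E × ℝ => q.1) (𝓝 (x₀, t₀)) (𝓝 x₀) :=
      continuous_fst.tendsto _
    have hball' : ∀ᶠ y in 𝓝 x₀, dist y x₀ < ε := by
      filter_upwards [Metric.ball_mem_nhds x₀ hε] with y hy using hy
    have h1 : ∀ᶠ q : E × ℝ in 𝓝 (x₀, t₀), p q.1 ∈ intrinsicInterior ℝ D := by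
      filter_upwards [hfst.eventually hball'] with q hq using hnear q.1 hq
    have hgp : Tendsto (fun q : E × ℝ => g (p q.1)) (𝓝 (x₀, t₀)) (𝓝 (g (p x₀))) := by
      have htoD : Tendsto (fun q : E × ℝ => p q.1) (𝓝 (x₀, t₀)) (𝓝[D] (p x₀)) := by
        rw [tendsto_nhdsWithin_iff]
        exact ⟨(hpcont.comp continuous_fst).tendsto _,
          h1.mono fun q hq => intrinsicInterior_subset hq⟩
      exact Filter.Tendsto.comp (hgcont (p x₀) (intrinsicInterior_subset hx₀)) htoD
    have h2 : ∀ᶠ q : E × ℝ in 𝓝 (x₀, t₀), q.2 < g (p q.1) :=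
      (continuous_snd.tendsto _).eventually_lt hgp ht₀
    filter_upwards [h1, h2] with q hq1 hq2 using ⟨hq1, hq2⟩
  have hSconv : Convex ℝ S := by
    rintro ⟨x₁, t₁⟩ ⟨hx₁, ht₁⟩ ⟨x₂, t₂⟩ ⟨hx₂, ht₂⟩ a b ha hb hab
    have hb' : b = 1 - a := by linarith
    subst hb'
    rcases eq_or_lt_of_le ha with rfl | ha'
    · simpa using ⟨hx₂, ht₂⟩
    rcases eq_or_lt_of_le hb with h1 | hb'
    · have : a = 1 := by linarith
      subst this
      simpa using ⟨hx₁, ht₁⟩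
    constructor
    · show p (a • x₁ + (1 - a) • x₂) ∈ intrinsicInterior ℝ D
      rw [hpaffine]
      exact hcombo _ hx₁ _ hx₂ a ha (by linarith)
    · show a * t₁ + (1 - a) * t₂ < g (p (a • x₁ + (1 - a) • x₂))
      rw [hpaffine]
      calc a * t₁ + (1 - a) * t₂ < a * g (p x₁) + (1 - a) * g (p x₂) := by
            have := mul_lt_mul_of_pos_left ht₁ ha'
            have := mul_lt_mul_of_pos_left ht₂ hb'
            linarith
        _ ≤ g (a • p x₁ + (1 - a) • p x₂) := hconc _ hx₁ _ hx₂ a ha (by linarith)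
  have hnotmem : ((u, g u) : E × ℝ) ∉ S := by
    rintro ⟨-, h⟩
    rw [hpfix u huA] at h
    exact lt_irrefl _ h
  obtain ⟨φ, hφ⟩ := geometric_hahn_banach_open_point hSconv hSopen hnotmem
  have hφsplit : ∀ (x : E) (t : ℝ), φ (x, t) = φ (x, 0) + t * φ (0, 1) := by
    intro x t
    have hxt : ((x, t) : E × ℝ) = (x, 0) + t • ((0 : E), (1 : ℝ)) := by
      simp [Prod.ext_iff]
    rw [hxt, map_add, map_smul, smul_eq_mul]
  have ha₀ : 0 < φ (0, 1) := by
    have hmem : ((u, g u - 1) : E × ℝ) ∈ S := by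
      refine ⟨?_, ?_⟩ <;> rw [hpfix u huA]
      · exact hu
      · show g u - 1 < g u; linarith
    have hlt := hφ _ hmem
    rw [hφsplit u (g u - 1), hφsplit u (g u)] at hlt
    nlinarith
  set a₀ : ℝ := φ (0, 1) with ha₀def
  set ψ : E → ℝ := fun x => φ (x, 0) with hψ
  have hψeq : ∀ x : E, φ (x, 0) = ψ x := fun _ => rfl
  have ha₀eq : φ (0, 1) = a₀ := rfl
  have hψlin : ∀ x y : E, ψ (x - y) = ψ x - ψ y := by
    intro x y
    have hxy : ((x - y, (0:ℝ)) : E × ℝ) = (x, 0) - (y, 0) := by simp [Prod.ext_iff]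
    rw [hψ]; simp only; rw [hxy, map_sub]
  set β : E := (-(a₀⁻¹)) • ((InnerProductSpace.toDual ℝ E).symm
    (φ.comp (ContinuousLinearMap.inl ℝ E ℝ))) with hβ
  have hβinner : ∀ y : E, (⟪β, y⟫ : ℝ) = -(a₀⁻¹) * ψ y := by
    intro y
    rw [hβ, real_inner_smul_left, InnerProductSpace.toDual_symm_apply]
    rfl
  -- weak supporting inequality on the relative interior
  have hweak : ∀ w ∈ intrinsicInterior ℝ D, g w ≤ g u + ⟪β, w - u⟫ := by
    intro w hw
    by_contra hlt
    push_neg at hlt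
    have hwA : w ∈ affineSpan ℝ D := subset_affineSpan ℝ D (intrinsicInterior_subset hw)
    have hmem : ((w, g u + ⟪β, w - u⟫) : E × ℝ) ∈ S := by
      refine ⟨?_, ?_⟩ <;> rw [hpfix w hwA]
      · exact hw
      · exact hlt
    have hineq := hφ _ hmem
    rw [hφsplit w (g u + ⟪β, w - u⟫), hφsplit u (g u)] at hineq
    simp only [hψeq, ha₀eq] at hineq
    have hca : (⟪β, w - u⟫ : ℝ) * a₀ = -(ψ w - ψ u) := by
      rw [hβinner, hψlin]
      field_simp
    have hexp : (g u + (⟪β, w - u⟫ : ℝ)) * a₀ = g u * a₀ + (⟪β, w - u⟫ : ℝ) * a₀ := by ring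
    linarith
  refine ⟨β, ?_⟩
  intro v hv hvu
  by_contra hge
  push_neg at hge
  have hvu' : v - u ≠ 0 := sub_ne_zero.2 hvu
  have hm : u + (1/2 : ℝ) • (v - u) ∈ intrinsicInterior ℝ D :=
    hseg v hv (1/2) (by norm_num) (by norm_num)
  have hmD : u + (1/2 : ℝ) • (v - u) ∈ D := intrinsicInterior_subset hm
  set xt : ℝ → E := fun t => u + t • (v - u) with hxt
  have hxtdef : ∀ t : ℝ, xt t = u + t • (v - u) := fun _ => rfl
  have hxtc : Continuous xt := continuous_const.add (continuous_id.smul continuous_const)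
  have hIoo : ∀ t ∈ Ioo (0:ℝ) 1, xt t ∈ intrinsicInterior ℝ D := fun t ht =>
    hseg v hv t (le_of_lt ht.1) ht.2
  haveI : (𝓝[Ioo (0:ℝ) 1] (1:ℝ)).NeBot := right_nhdsWithin_Ioo_neBot one_pos
  have hgv : Tendsto (fun t => g (xt t)) (𝓝[Ioo (0:ℝ) 1] 1) (𝓝 (g v)) := by
    have h1 : Tendsto xt (𝓝[Ioo (0:ℝ) 1] 1) (𝓝[D] v) := by
      rw [tendsto_nhdsWithin_iff]
      constructor
      · have h2 := (hxtc.tendsto 1).mono_left (nhdsWithin_le_nhds (s := Ioo (0:ℝ) 1))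
        have h3 : xt 1 = v := by rw [hxtdef]; module
        rwa [h3] at h2
      · filter_upwards [self_mem_nhdsWithin] with t ht using intrinsicInterior_subset (hIoo t ht)
    exact Filter.Tendsto.comp (hgcont v hv) h1
  have hgm : Tendsto (fun t => g (xt (t/2))) (𝓝[Ioo (0:ℝ) 1] 1)
      (𝓝 (g (u + (1/2 : ℝ) • (v - u)))) := by
    have h0 : Tendsto (fun t : ℝ => t/2) (𝓝[Ioo (0:ℝ) 1] 1) (𝓝 (1/2 : ℝ)) :=
      ((continuous_id.div_const 2).tendsto 1).mono_left nhdsWithin_le_nhds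
    have h1 : Tendsto (fun t => xt (t/2)) (𝓝[Ioo (0:ℝ) 1] 1) (𝓝[D] (u + (1/2 : ℝ) • (v - u))) := by
      rw [tendsto_nhdsWithin_iff]
      constructor
      · have := (hxtc.tendsto (1/2 : ℝ)).comp h0
        rwa [hxtdef] at this
      · filter_upwards [self_mem_nhdsWithin] with t ht
        exact intrinsicInterior_subset
          (hseg v hv (t/2) (by linarith [ht.1]) (by linarith [ht.2]))
    exact Filter.Tendsto.comp (hgcont _ hmD) h1
  have hev : ∀ᶠ t in 𝓝[Ioo (0:ℝ) 1] 1, (g u + g (xt t))/2 ≤ g (xt (t/2)) := by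
    filter_upwards [self_mem_nhdsWithin] with t ht
    have hne : u ≠ xt t := by
      intro h
      have h2 : t • (v - u) = 0 := by
        have h3 := h.symm
        rw [hxtdef, add_eq_left] at h3
        exact h3
      rcases smul_eq_zero.1 h2 with h3 | h3
      · exact absurd h3 (ne_of_gt ht.1)
      · exact hvu' h3
    have hs := hstrict u hu (xt t) (hIoo t ht) hne (1/2) (by norm_num) (by norm_num)
    have hxx : (1/2:ℝ) • u + (1 - 1/2:ℝ) • xt t = xt (t/2) := by
      rw [hxtdef, hxtdef]; module
    rw [hxx] at hs
    linarith
  have hlim : (g u + g v)/2 ≤ g (u + (1/2 : ℝ) • (v - u)) :=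
    le_of_tendsto_of_tendsto ((hgv.const_add (g u)).div_const 2) hgm hev
  -- strict concavity at the quarter point
  have hq : u + (1/4:ℝ) • (v - u) ∈ intrinsicInterior ℝ D :=
    hseg v hv (1/4) (by norm_num) (by norm_num)
  have hneum : u ≠ u + (1/2:ℝ) • (v - u) := by
    intro h
    have h2 : (1/2:ℝ) • (v - u) = 0 := by
      have h3 := h.symm
      rw [add_eq_left] at h3
      exact h3
    rcases smul_eq_zero.1 h2 with h3 | h3
    · norm_num at h3
    · exact hvu' h3
  have hstr := hstrict u hu _ hm hneum (1/2) (by norm_num) (by norm_num)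
  have hqq : (1/2:ℝ) • u + (1 - 1/2:ℝ) • (u + (1/2:ℝ) • (v - u)) = u + (1/4:ℝ) • (v - u) := by
    module
  rw [hqq] at hstr
  have hwq := hweak _ hq
  have hiq : (⟪β, (u + (1/4:ℝ) • (v - u)) - u⟫ : ℝ) = (1/4) * ⟪β, v - u⟫ := by
    rw [add_sub_cancel_left, real_inner_smul_right]
  rw [hiq] at hwq
  linarith

theorem strictly_supporting_hyperplane_of_strictly_concave
    (σ : ℕ) (f : EuclideanSpace ℝ (Fin σ) → EReal)
    (htop : ∀ w, f w ≠ ⊤)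
    (hconv : Convex ℝ {w | f w ≠ ⊥})
    (hstrict : ∀ u ∈ intrinsicInterior ℝ {w | f w ≠ ⊥},
      ∀ v ∈ intrinsicInterior ℝ {w | f w ≠ ⊥}, u ≠ v → ∀ l : ℝ, 0 < l → l < 1 →
        ((l : ℝ) : EReal) * f u + ((1 - l : ℝ) : EReal) * f v < f (l • u + (1 - l) • v))
    (hcont : ContinuousOn f {w | f w ≠ ⊥}) :
    ∀ u ∈ intrinsicInterior ℝ {w | f w ≠ ⊥},
      ∃ β : EuclideanSpace ℝ (Fin σ), ∀ v, v ≠ u →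
        f v < f u + ((⟪β, v - u⟫ : ℝ) : EReal) := by
  intro u hu
  have huD : f u ≠ ⊥ := intrinsicInterior_subset hu
  have hgcont : ContinuousOn (fun w => (f w).toReal) {w | f w ≠ ⊥} := by
    intro w hw
    exact Filter.Tendsto.comp (EReal.tendsto_toReal (htop w) hw) (hcont w hw)
  have hstrict' : ∀ w₁ ∈ intrinsicInterior ℝ {w | f w ≠ ⊥},
      ∀ w₂ ∈ intrinsicInterior ℝ {w | f w ≠ ⊥}, w₁ ≠ w₂ → ∀ l : ℝ, 0 < l → l < 1 →
      l * (f w₁).toReal + (1 - l) * (f w₂).toReal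
        < (f (l • w₁ + (1 - l) • w₂)).toReal := by
    intro w₁ h1 w₂ h2 hne l hl0 hl1
    have h := hstrict w₁ h1 w₂ h2 hne l hl0 hl1
    have e1 := EReal.coe_toReal (htop w₁) (intrinsicInterior_subset h1)
    have e2 := EReal.coe_toReal (htop w₂) (intrinsicInterior_subset h2)
    have hcmem : l • w₁ + (1 - l) • w₂ ∈ {w | f w ≠ ⊥} :=
      hconv (intrinsicInterior_subset h1) (intrinsicInterior_subset h2)
        (le_of_lt hl0) (by linarith) (by ring)
    have e3 := EReal.coe_toReal (htop _) hcmem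
    rw [← e1, ← e2, ← e3, ← EReal.coe_mul, ← EReal.coe_mul, ← EReal.coe_add,
      EReal.coe_lt_coe_iff] at h
    exact h
  obtain ⟨β, hβ⟩ := exists_strict_supergradient hconv hstrict' hgcont hu
  refine ⟨β, fun v hvu => ?_⟩
  have hrhs : f u + ((⟪β, v - u⟫ : ℝ) : EReal)
      = (((f u).toReal + ⟪β, v - u⟫ : ℝ) : EReal) := by
    rw [EReal.coe_add, EReal.coe_toReal (htop u) huD]
  by_cases hv : f v = ⊥
  · rw [hv, hrhs]
    exact EReal.bot_lt_coe _
  · have h := hβ v hv hvu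
    rw [hrhs, ← EReal.coe_toReal (htop v) hv, EReal.coe_lt_coe_iff]
    exact h
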